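/- Let G be an infinite discrete group and let X be a minimal G-flow. Then the following are equivalent: (i) for every finite D ⊆ G there is a D-separated S ⊆ G such that S·x is dense in X for every x ∈ X; (ii) X has the separated covering property; (iii) X is disjoint from the Bernoulli flow 2^G. -/

import Mathlib

open Pointwise

section Defs

variable (G : Type*) [Group G]

/-- The right-shift of `G` on `G → A`: `(g • z) h = z (h * g)`. -/
instance (priority := high) shiftSMul (A : Type*) : SMul G (G → A) :=
  ⟨fun g z h => z (h * g)⟩

/-- The right-shift action of `G` on `G → A` is a `G`-action (the Bernoulli flow when
`A = Bool`). -/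
instance shiftMulAction (A : Type*) : MulAction G (G → A) where
  one_smul z := funext fun h => by show z (h * 1) = z h; rw [mul_one]
  mul_smul g₁ g₂ z := funext fun h => by
    show z (h * (g₁ * g₂)) = z (h * g₁ * g₂)
    rw [mul_assoc]

/-- `S ⊆ G` is `D`-separated if `Dg ∩ Dh = ∅` for all distinct `g, h ∈ S`. -/
def DSeparated (D S : Set G) : Prop :=
  ∀ g ∈ S, ∀ h ∈ S, g ≠ h → Disjoint (D * ({g} : Set G)) (D * ({h} : Set G))

/-- The separated covering property for a `G`-flow `X`: for every finite `D ⊆ G`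
and every nonempty open `U ⊆ X` there is a `D`-separated `S ⊆ G` with `S⁻¹U = X`. -/
def SCP (X : Type*) [TopologicalSpace X] [MulAction G X] : Prop :=
  ∀ D : Set G, D.Finite → ∀ U : Set X, IsOpen U → U.Nonempty →
    ∃ S : Set G, DSeparated G D S ∧ ∀ x : X, ∃ s ∈ S, s • x ∈ U

/-- A `G`-flow is minimal if every orbit is dense. -/
def IsMinimalFlow (X : Type*) [TopologicalSpace X] [MulAction G X] : Prop :=
  ∀ x : X, Dense (MulAction.orbit G x)

/-- Two `G`-flows `X` and `Y` are disjoint if the only closed `G`-invariant subset of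
`X × Y` projecting onto both factors is `X × Y` itself. -/
def FlowsDisjoint (X Y : Type*) [TopologicalSpace X] [TopologicalSpace Y]
    [MulAction G X] [MulAction G Y] : Prop :=
  ∀ J : Set (X × Y), IsClosed J → (∀ (g : G), ∀ p ∈ J, g • p ∈ J) →
    Prod.fst '' J = Set.univ → Prod.snd '' J = Set.univ → J = Set.univ

end Defs

section Aux

universe u
variable {G : Type u} [Group G]

lemma dsep_mono {D S S' : Set G} (h : S' ⊆ S) (hs : DSeparated G D S) : DSeparated G D S' :=
  fun g hg h' hh' hne => hs g (h hg) h' (h hh') hne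

lemma mem_block {D : Set G} {a x : G} : x ∈ D * ({a} : Set G) ↔ ∃ d ∈ D, d * a = x := by
  simp only [Set.mem_mul, Set.mem_singleton_iff]
  constructor
  · rintro ⟨d, hd, w, rfl, rfl⟩; exact ⟨d, hd, rfl⟩
  · rintro ⟨d, hd, rfl⟩; exact ⟨d, hd, a, rfl, rfl⟩

lemma mem_Dblock {D T : Set G} {g a : G} :
    a ∈ D * (T * ({g} : Set G)) ↔ ∃ d ∈ D, ∃ t ∈ T, d * (t * g) = a := by
  simp only [Set.mem_mul, Set.mem_singleton_iff]
  constructor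
  · rintro ⟨d, hd, y, ⟨t, ht, w, rfl, rfl⟩, rfl⟩; exact ⟨d, hd, t, ht, rfl⟩
  · rintro ⟨d, hd, t, ht, rfl⟩; exact ⟨d, hd, t * g, ⟨t, ht, g, rfl, rfl⟩, rfl⟩

lemma scp_finset {X : Type*} [TopologicalSpace X] [CompactSpace X] [MulAction G X]
    [ContinuousConstSMul G X] (hscp : SCP G X) {D : Set G} (hD : D.Finite) {U : Set X}
    (hU : IsOpen U) (hne : U.Nonempty) :
    ∃ T : Finset G, DSeparated G D ↑T ∧ ∀ x : X, ∃ t ∈ T, t • x ∈ U := by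
  classical
  obtain ⟨S, hsep, hcov⟩ := hscp D hD U hU hne
  have hcover : (Set.univ : Set X) ⊆ ⋃ s : S, (fun x => (s : G) • x) ⁻¹' U := by
    intro x _
    obtain ⟨s, hs, hsx⟩ := hcov x
    exact Set.mem_iUnion.2 ⟨⟨s, hs⟩, hsx⟩
  obtain ⟨t, ht⟩ := isCompact_univ.elim_finite_subcover
    (fun s : S => (fun x => (s : G) • x) ⁻¹' U)
    (fun s => hU.preimage (continuous_const_smul (s : G))) hcover
  refine ⟨t.image Subtype.val, ?_, ?_⟩
  · refine dsep_mono ?_ hsep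
    intro a ha
    simp only [Finset.coe_image, Set.mem_image, Finset.mem_coe] at ha
    obtain ⟨s, _, rfl⟩ := ha
    exact s.2
  · intro x
    have := ht (Set.mem_univ x)
    simp only [Set.mem_iUnion, Set.mem_preimage] at this
    obtain ⟨s, hst, hsx⟩ := this
    exact ⟨(s : G), Finset.mem_image_of_mem _ hst, hsx⟩

lemma exists_avoid [Infinite G] {ι : Type u} (hlt : Cardinal.mk ι < Cardinal.mk G)
    (K : ι → Set G) (hK : ∀ i, (K i).Finite) : ∃ g : G, ∀ i, g ∉ K i := by
  by_contra hcon
  push_neg at hcon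
  have huniv : (⋃ i, K i) = Set.univ := Set.eq_univ_of_forall fun g => Set.mem_iUnion.2 (hcon g)
  cases finite_or_infinite ι with
  | inl hfin =>
    have : (⋃ i, K i).Finite := Set.finite_iUnion hK
    rw [huniv] at this
    exact Set.infinite_univ this
  | inr hinf =>
    have h1 : Cardinal.mk (⋃ i, K i : Set G) ≤ Cardinal.mk ι * ⨆ i, Cardinal.mk (K i) :=
      Cardinal.mk_iUnion_le K
    have h2 : ⨆ i, Cardinal.mk (K i : Set G) ≤ Cardinal.aleph0 :=
      ciSup_le fun i => (hK i).lt_aleph0.le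
    have h3 : Cardinal.mk ι * ⨆ i, Cardinal.mk (K i : Set G) ≤ Cardinal.mk ι := by
      calc Cardinal.mk ι * ⨆ i, Cardinal.mk (K i : Set G)
          ≤ Cardinal.mk ι * Cardinal.aleph0 := by gcongr
        _ = Cardinal.mk ι := by
            rw [Cardinal.mul_eq_max (Cardinal.aleph0_le_mk ι) le_rfl]
            exact max_eq_left (Cardinal.aleph0_le_mk ι)
    have h4 : Cardinal.mk G ≤ Cardinal.mk ι := by
      calc Cardinal.mk G = Cardinal.mk (Set.univ : Set G) := Cardinal.mk_univ.symm
        _ = Cardinal.mk (⋃ i, K i : Set G) := by rw [huniv]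
        _ ≤ Cardinal.mk ι := le_trans h1 h3
    exact absurd hlt (not_lt.2 h4)

lemma exists_blocks [Infinite G] {D : Set G} (hD : D.Finite) :
    ∃ g : {T : Finset G // DSeparated G D (↑T : Set G)} → G,
      ∀ T T' : {T : Finset G // DSeparated G D (↑T : Set G)}, T ≠ T' →
        Disjoint (D * ((↑T.1 : Set G) * {g T})) (D * ((↑T'.1 : Set G) * {g T'})) := by
  classical
  obtain ⟨r, wo, hr⟩ := Cardinal.ord_eq {T : Finset G // DSeparated G D (↑T : Set G)}
  haveI := wo
  have hcard : ∀ T : {T : Finset G // DSeparated G D (↑T : Set G)},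
      Cardinal.mk {T' // r T' T} < Cardinal.mk G := by
    intro T
    have h1 : Ordinal.typein r T < Ordinal.type r := Ordinal.typein_lt_type r T
    rw [← hr] at h1
    have h2 := Cardinal.lt_ord.mp h1
    have h3 : Cardinal.mk {T' // r T' T} = (Ordinal.typein r T).card := Ordinal.card_typein T
    calc Cardinal.mk {T' // r T' T} = (Ordinal.typein r T).card := h3
      _ < Cardinal.mk {T : Finset G // DSeparated G D (↑T : Set G)} := h2
      _ ≤ Cardinal.mk (Finset G) := Cardinal.mk_subtype_le _
      _ = Cardinal.mk G := Cardinal.mk_finset_of_infinite G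
  have key : ∀ (T : {T : Finset G // DSeparated G D (↑T : Set G)})
      (prev : ∀ T', r T' T → G), ∃ gT : G,
      ∀ T' (h : r T' T),
        Disjoint (D * ((↑T'.1 : Set G) * {prev T' h})) (D * ((↑T.1 : Set G) * {gT})) := by
    intro T prev
    set K : {T' // r T' T} → Set G := fun i =>
      (fun q : (G × G) × G × G => q.1.1⁻¹ * (q.1.2⁻¹ * (q.2.1 * (q.2.2 * prev i.1 i.2)))) ''
        (((↑T.1 : Set G) ×ˢ D) ×ˢ (D ×ˢ (↑i.1.1 : Set G))) with hKdef
    have hKfin : ∀ i, (K i).Finite := fun i =>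
      (((T.1.finite_toSet.prod hD).prod (hD.prod i.1.1.finite_toSet))).image _
    obtain ⟨gT, hgT⟩ := exists_avoid (hcard T) K hKfin
    refine ⟨gT, fun T' h => ?_⟩
    rw [Set.disjoint_right]
    rintro a ha ha'
    rw [mem_Dblock] at ha ha'
    obtain ⟨d1, hd1, t1, ht1, he1⟩ := ha
    obtain ⟨d2, hd2, t2, ht2, he2⟩ := ha'
    apply hgT ⟨T', h⟩
    refine ⟨((t1, d1), d2, t2), ⟨⟨ht1, hd1⟩, hd2, ht2⟩, ?_⟩
    show t1⁻¹ * (d1⁻¹ * (d2 * (t2 * prev T' h))) = gT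
    rw [he2, ← he1, inv_mul_cancel_left, inv_mul_cancel_left]
  have hwf : WellFounded r := wo.wf
  let g : {T : Finset G // DSeparated G D (↑T : Set G)} → G :=
    hwf.fix (fun T prev => (key T prev).choose)
  have hfix : ∀ T, g T = (key T (fun T' _ => g T')).choose := fun T =>
    hwf.fix_eq (fun T prev => (key T prev).choose) T
  have hg : ∀ T T' (h : r T' T),
      Disjoint (D * ((↑T'.1 : Set G) * {g T'})) (D * ((↑T.1 : Set G) * {g T})) := by
    intro T T' h
    have hs := (key T (fun T'' _ => g T'')).choose_spec T' h
    rwa [← hfix T] at hs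
  refine ⟨g, fun T T' hne => ?_⟩
  rcases trichotomous_of r T T' with h | h | h
  · exact hg T' T h
  · exact absurd h hne
  · exact (hg T T' h).symm

end Aux

section Main

universe u
variable {G : Type u} [Group G]
variable {X : Type*} [TopologicalSpace X] [CompactSpace X] [T2Space X] [Nonempty X]
  [MulAction G X] [ContinuousConstSMul G X]

lemma imp_i_ii (h1 : ∀ D : Set G, D.Finite → ∃ S : Set G, DSeparated G D S ∧
    ∀ x : X, Dense ((fun s => s • x) '' S)) : SCP G X := by
  intro D hD U hU hUne
  obtain ⟨S, hsep, hdense⟩ := h1 D hD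
  refine ⟨S, hsep, fun x => ?_⟩
  obtain ⟨y, hyU, s, hs, rfl⟩ := dense_iff_inter_open.mp (hdense x) U hU hUne
  exact ⟨s, hs, hyU⟩

lemma imp_ii_i [Infinite G] (hscp : SCP G X) :
    ∀ D : Set G, D.Finite → ∃ S : Set G, DSeparated G D S ∧
      ∀ x : X, Dense ((fun s => s • x) '' S) := by
  intro D hD
  obtain ⟨g, hg⟩ := exists_blocks (G := G) hD
  refine ⟨{a : G | ∃ T : {T : Finset G // DSeparated G D (↑T : Set G)},
    ∃ t ∈ T.1, t * g T = a}, ?_, ?_⟩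
  · rintro a ⟨T, t, ht, rfl⟩ b ⟨T', t', ht', rfl⟩ hne
    by_cases hTT : T = T'
    · subst hTT
      have htne : t ≠ t' := fun hh => hne (by rw [hh])
      have hdis := T.2 t (Finset.mem_coe.mpr ht) t' (Finset.mem_coe.mpr ht') htne
      rw [Set.disjoint_left] at hdis ⊢
      intro x hx hx'
      rw [mem_block] at hx hx'
      obtain ⟨d, hd, he⟩ := hx
      obtain ⟨d', hd', he'⟩ := hx'
      have hkey : d' * t' = d * t := by
        have h2 : (d * t) * g T = (d' * t') * g T := by
          rw [mul_assoc, mul_assoc, he, he']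
        exact (mul_right_cancel h2).symm
      exact hdis (mem_block.2 ⟨d, hd, rfl⟩) (mem_block.2 ⟨d', hd', hkey⟩)
    · have hdis := hg T T' hTT
      refine Set.disjoint_of_subset ?_ ?_ hdis
      · refine Set.mul_subset_mul_left ?_
        rw [Set.singleton_subset_iff]
        exact ⟨t, Finset.mem_coe.mpr ht, g T, Set.mem_singleton _, rfl⟩
      · refine Set.mul_subset_mul_left ?_
        rw [Set.singleton_subset_iff]
        exact ⟨t', Finset.mem_coe.mpr ht', g T', Set.mem_singleton _, rfl⟩
  · intro x
    rw [dense_iff_inter_open]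
    intro V hV hVne
    obtain ⟨T₀, hT₀sep, hT₀cov⟩ := scp_finset hscp hD hV hVne
    obtain ⟨t, htT, htV⟩ := hT₀cov (g ⟨T₀, hT₀sep⟩ • x)
    refine ⟨(t * g ⟨T₀, hT₀sep⟩) • x, ?_,
      ⟨t * g ⟨T₀, hT₀sep⟩, ⟨⟨T₀, hT₀sep⟩, t, htT, rfl⟩, rfl⟩⟩
    rw [mul_smul]; exact htV

lemma imp_ii_iii (hscp : SCP G X) : FlowsDisjoint G X (G → Bool) := by
  classical
  intro J hJc hJinv hJ1 hJ2
  rw [Set.eq_univ_iff_forall]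
  rintro ⟨x₀, z₀⟩
  rw [← hJc.closure_eq, mem_closure_iff]
  intro O hO hpO
  obtain ⟨u, v, hu, hv, hx₀u, hz₀v, huv⟩ := isOpen_prod_iff.mp hO x₀ z₀ hpO
  have hv' : v ∈ nhds z₀ := hv.mem_nhds hz₀v
  rw [nhds_pi] at hv'
  obtain ⟨I, t, htf, hts⟩ := Filter.mem_pi'.mp hv'
  obtain ⟨S, hsep, hcov⟩ := hscp ↑I I.finite_toSet u hu ⟨x₀, hx₀u⟩
  set w : G → Bool := fun k =>
    if h : ∃ p : G × G, p.1 ∈ I ∧ p.2 ∈ S ∧ p.1 * p.2 = k then z₀ h.choose.1 else false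
    with hwdef
  have hwval : ∀ f s, f ∈ I → s ∈ S → w (f * s) = z₀ f := by
    intro f s hf hs
    have hex : ∃ p : G × G, p.1 ∈ I ∧ p.2 ∈ S ∧ p.1 * p.2 = f * s := ⟨(f, s), hf, hs, rfl⟩
    have h1 : w (f * s) = z₀ hex.choose.1 := by simp only [hwdef]; rw [dif_pos hex]
    obtain ⟨hf', hs', heq⟩ := hex.choose_spec
    have h2 : hex.choose.1 = f := by
      by_cases hss : hex.choose.2 = s
      · rw [hss] at heq; exact mul_right_cancel heq
      · exfalso
        have hdis := hsep _ hs' s hs hss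
        rw [Set.disjoint_left] at hdis
        exact hdis (mem_block.2 ⟨hex.choose.1, Finset.mem_coe.mpr hf', heq⟩)
          (mem_block.2 ⟨f, Finset.mem_coe.mpr hf, rfl⟩)
    rw [h1, h2]
  have hw : w ∈ Prod.snd '' J := by rw [hJ2]; exact Set.mem_univ _
  obtain ⟨p, hpJ, hpw⟩ := hw
  obtain ⟨s, hs, hsyu⟩ := hcov p.1
  refine ⟨s • p, huv ?_, hJinv s p hpJ⟩
  refine Set.mem_prod.mpr ⟨hsyu, ?_⟩
  apply hts
  intro i hi
  have hival : (s • p.2) i = z₀ i := by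
    show p.2 (i * s) = z₀ i
    rw [hpw]
    exact hwval i s hi hs
  show (s • p.2) i ∈ t i
  rw [hival]
  exact mem_of_mem_nhds (htf i)

lemma imp_iii_ii (hdisj : FlowsDisjoint G X (G → Bool)) : SCP G X := by
  classical
  by_contra hscp
  unfold SCP at hscp
  push_neg at hscp
  obtain ⟨D, hD, U, hU, hUne, hbad⟩ := hscp
  set E : Set G := D⁻¹ * D with hE
  set Sel : (G → Bool) → G → Prop := fun z k =>
    z k = true ∧ ∀ h ∈ E * ({k} : Set G), h ≠ k → z h = false with hSel
  have hsepSel : ∀ z : G → Bool, DSeparated G D {k | Sel z k} := by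
    intro z k hk h hh hne
    rw [Set.disjoint_left]
    intro x hx hx'
    rw [mem_block] at hx hx'
    obtain ⟨d, hd, he⟩ := hx
    obtain ⟨d', hd', he'⟩ := hx'
    have hmem : h ∈ E * ({k} : Set G) := by
      rw [mem_block]
      exact ⟨d'⁻¹ * d, Set.mul_mem_mul (Set.inv_mem_inv.2 hd') hd,
        by rw [mul_assoc, he, ← he', inv_mul_cancel_left]⟩
    have hfalse := hk.2 h hmem (Ne.symm hne)
    exact absurd (hh.1.symm.trans hfalse) (by decide)
  have hSelEquiv : ∀ (gg k : G) (z : G → Bool), Sel (gg • z) k ↔ Sel z (k * gg) := by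
    intro gg k z
    constructor
    · rintro ⟨h1, h2⟩
      refine ⟨h1, ?_⟩
      intro h hm hne
      rw [mem_block] at hm
      obtain ⟨e, he, hek⟩ := hm
      have h'mem : e * k ∈ E * ({k} : Set G) := mem_block.2 ⟨e, he, rfl⟩
      have h'ne : e * k ≠ k := by
        intro hq
        apply hne
        rw [← hek, ← mul_assoc, hq]
      have hz := h2 (e * k) h'mem h'ne
      rw [← hek, ← mul_assoc]
      exact hz
    · rintro ⟨h1, h2⟩
      refine ⟨h1, ?_⟩
      intro h hm hne
      rw [mem_block] at hm
      obtain ⟨e, he, hek⟩ := hm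
      have h'mem : e * (k * gg) ∈ E * ({k * gg} : Set G) := mem_block.2 ⟨e, he, rfl⟩
      have h'ne : e * (k * gg) ≠ k * gg := by
        intro hq
        apply hne
        rw [← hek]
        rw [← mul_assoc] at hq
        exact mul_right_cancel hq
      have hz := h2 _ h'mem h'ne
      show z (h * gg) = false
      rw [← hek, mul_assoc]
      exact hz
  set J : Set (X × (G → Bool)) := {p | ∀ k : G, Sel p.2 k → k • p.1 ∉ U} with hJ
  have hclopen : ∀ k : G, IsClopen {z : G → Bool | Sel z k} := by
    intro k
    have hfin : ((E * ({k} : Set G)) \ {k}).Finite :=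
      (((hD.inv.mul hD).mul (Set.finite_singleton k)).diff)
    have hrw : {z : G → Bool | Sel z k} =
        ((fun z : G → Bool => z k) ⁻¹' {true}) ∩
          ⋂ h ∈ (E * ({k} : Set G)) \ {k}, (fun z : G → Bool => z h) ⁻¹' {false} := by
      ext z
      simp only [hSel, Set.mem_setOf_eq, Set.mem_inter_iff, Set.mem_preimage,
        Set.mem_singleton_iff, Set.mem_iInter, Set.mem_diff]
      constructor
      · rintro ⟨h1, h2⟩
        exact ⟨h1, fun h hm => h2 h hm.1 hm.2⟩
      · rintro ⟨h1, h2⟩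
        exact ⟨h1, fun h hm hne => h2 h ⟨hm, hne⟩⟩
    rw [hrw]
    refine IsClopen.inter ?_ ?_
    · exact (isClopen_discrete {true}).preimage (continuous_apply k)
    · constructor
      · exact isClosed_biInter fun h _ =>
          ((isClosed_discrete {false}).preimage (continuous_apply h))
      · exact hfin.isOpen_biInter fun h _ =>
          ((isOpen_discrete {false}).preimage (continuous_apply h))
  have hJc : IsClosed J := by
    have hrw : J = ⋂ k : G,
        ((Prod.snd ⁻¹' {z : G → Bool | Sel z k}) ∩ ((fun p : X × (G → Bool) => k • p.1) ⁻¹' U))ᶜ := by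
      ext p
      simp only [hJ, Set.mem_setOf_eq, Set.mem_iInter, Set.mem_compl_iff, Set.mem_inter_iff,
        Set.mem_preimage, not_and]
    rw [hrw]
    refine isClosed_iInter fun k => ?_
    refine IsOpen.isClosed_compl ?_
    exact (((hclopen k).2.preimage continuous_snd).inter
      (hU.preimage ((continuous_const_smul k).comp continuous_fst)))
  have hJinv : ∀ (gg : G), ∀ p ∈ J, gg • p ∈ J := by
    intro gg p hp
    simp only [hJ, Set.mem_setOf_eq] at hp ⊢
    intro k hSelk
    have h1 : Sel p.2 (k * gg) := (hSelEquiv gg k p.2).mp hSelk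
    have h2 := hp (k * gg) h1
    intro hmem
    apply h2
    rw [mul_smul]
    exact hmem
  have hJ1 : Prod.fst '' J = Set.univ := by
    rw [Set.eq_univ_iff_forall]
    intro x
    refine ⟨(x, fun _ => false), ?_, rfl⟩
    simp only [hJ, Set.mem_setOf_eq]
    intro k hSelk
    exact absurd hSelk.1 (by simp)
  have hJ2 : Prod.snd '' J = Set.univ := by
    rw [Set.eq_univ_iff_forall]
    intro z
    obtain ⟨x, hx⟩ := hbad {k | Sel z k} (hsepSel z)
    refine ⟨(x, z), ?_, rfl⟩
    simp only [hJ, Set.mem_setOf_eq]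
    intro k hSelk
    exact hx k hSelk
  have huniv := hdisj J hJc hJinv hJ1 hJ2
  obtain ⟨x₀, hx₀⟩ := hUne
  have hz1 : Sel (fun h : G => if h = 1 then true else false) 1 := by
    constructor
    · simp
    · intro h hm hne; simp [hne]
  have hmem : (x₀, fun h : G => if h = 1 then true else false) ∈ J := by
    rw [huniv]; trivial
  simp only [hJ, Set.mem_setOf_eq] at hmem
  exact (hmem 1 hz1) (by rw [one_smul]; exact hx₀)

end Main


/-- For a minimal `G`-flow `X` (with `G` infinite), the following are
equivalent: (i) for every finite `D ⊆ G` there is a `D`-separated `S ⊆ G` such that `S·x`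
is dense for every `x ∈ X`; (ii) `X` has the separated covering property; (iii) `X` is
disjoint from the Bernoulli flow `2^G`. -/
theorem SCP_equivalences
    (G : Type*) [Group G] [Infinite G]
    (X : Type*) [TopologicalSpace X] [CompactSpace X] [T2Space X] [Nonempty X]
    [MulAction G X] [ContinuousConstSMul G X]
    (hXmin : IsMinimalFlow G X) :
    ((∀ D : Set G, D.Finite →
        ∃ S : Set G, DSeparated G D S ∧ ∀ x : X, Dense ((fun s => s • x) '' S)) ↔
      SCP G X) ∧
    (SCP G X ↔ FlowsDisjoint G X (G → Bool)) := by
  constructor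
  · exact ⟨fun h1 => imp_i_ii h1, fun h2 => imp_ii_i h2⟩
  · exact ⟨fun h2 => imp_ii_iii h2, fun h3 => imp_iii_ii h3⟩
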